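/- Let ν ≥ 0 be a real number and let J_ν be the Bessel function of the first kind, defined for r > 0 by the absolutely convergent series J_ν(r) = Σ_{k=0}^∞ [(−1)^k / (Γ(k+1) Γ(k+ν+1))] · (r/2)^(2k+ν). Then J_ν is bounded on (0,∞): there exists a constant C > 0 such that |J_ν(r)| ≤ C for all r > 0. -/

import Mathlib

open Real

namespace BesselAux

/-- Series coefficients of the Bessel function. -/
noncomputable def a (ν : ℝ) (k : ℕ) : ℝ :=
  (-1 : ℝ) ^ k / (Real.Gamma ((k : ℝ) + 1) * Real.Gamma ((k : ℝ) + ν + 1))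

/-- Shifted/derivative coefficients. -/
noncomputable def dcoef (c : ℕ → ℝ) (k : ℕ) : ℝ := ((k : ℝ) + 1) * c (k + 1)

/-- The generic power series sum. -/
noncomputable def psum (c : ℕ → ℝ) (x : ℝ) : ℝ := ∑' k : ℕ, c k * x ^ k

lemma gamma_pos {ν : ℝ} (hν : 0 ≤ ν) (k : ℕ) : 0 < Real.Gamma ((k : ℝ) + ν + 1) :=
  Real.Gamma_pos_of_pos (by positivity)

lemma gamma_ge {ν : ℝ} (hν : 0 ≤ ν) (k : ℕ) :
    (k.factorial : ℝ) * Real.Gamma (ν + 1) ≤ Real.Gamma ((k : ℝ) + ν + 1) := by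
  induction k with
  | zero => simp
  | succ k ih =>
    have hpos : (0:ℝ) < (k : ℝ) + ν + 1 := by positivity
    have h1 : Real.Gamma (((k+1 : ℕ) : ℝ) + ν + 1) =
        ((k : ℝ) + ν + 1) * Real.Gamma ((k : ℝ) + ν + 1) := by
      push_cast
      rw [show (k : ℝ) + 1 + ν + 1 = ((k : ℝ) + ν + 1) + 1 by ring,
        Real.Gamma_add_one (ne_of_gt hpos)]
    rw [h1]
    have hk1 : ((k : ℝ) + 1) ≤ (k : ℝ) + ν + 1 := by linarith
    have hG := (gamma_pos hν k)
    have hΓν : 0 ≤ Real.Gamma (ν + 1) := (Real.Gamma_pos_of_pos (by linarith)).le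
    calc ((k+1).factorial : ℝ) * Real.Gamma (ν + 1)
        = ((k : ℝ) + 1) * ((k.factorial : ℝ) * Real.Gamma (ν + 1)) := by
          push_cast [Nat.factorial_succ]; ring
      _ ≤ ((k : ℝ) + ν + 1) * Real.Gamma ((k : ℝ) + ν + 1) := by
          apply mul_le_mul hk1 ih (by positivity) (by linarith)

lemma abs_a_le {ν : ℝ} (hν : 0 ≤ ν) (k : ℕ) :
    |a ν k| ≤ (Real.Gamma (ν + 1))⁻¹ / ((k.factorial : ℝ) * k.factorial) := by
  have hΓν : 0 < Real.Gamma (ν + 1) := Real.Gamma_pos_of_pos (by linarith)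
  have h1 : Real.Gamma ((k : ℝ) + 1) = (k.factorial : ℝ) := by
    exact_mod_cast Real.Gamma_nat_eq_factorial k
  have h2 := gamma_ge hν k
  have hkf : (0:ℝ) < (k.factorial : ℝ) := by exact_mod_cast k.factorial_pos
  have hG := gamma_pos hν k
  rw [a, abs_div, abs_pow, abs_neg, abs_one, one_pow,
    abs_of_pos (by rw [h1]; positivity), h1]
  rw [div_le_div_iff₀ (by positivity) (by positivity)]
  calc (1:ℝ) * ((k.factorial : ℝ) * (k.factorial : ℝ))
      = ((k.factorial : ℝ) * Real.Gamma (ν+1)) * ((k.factorial : ℝ) * (Real.Gamma (ν+1))⁻¹) := by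
        field_simp
    _ ≤ Real.Gamma ((k : ℝ) + ν + 1) * ((k.factorial : ℝ) * (Real.Gamma (ν+1))⁻¹) := by
        apply mul_le_mul_of_nonneg_right h2 (by positivity)
    _ = (Real.Gamma (ν+1))⁻¹ * ((k.factorial : ℝ) * Real.Gamma ((k : ℝ) + ν + 1)) := by ring

lemma dcoef_bound {c : ℕ → ℝ} {D : ℝ} (hc : ∀ k, |c k| ≤ D / ((k.factorial : ℝ) * k.factorial)) :
    ∀ k, |dcoef c k| ≤ D / ((k.factorial : ℝ) * k.factorial) := by
  intro k
  have h := hc (k+1)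
  have hD : 0 ≤ D := by
    have := (abs_nonneg (c 0)).trans (hc 0)
    simpa using this
  have hkf : (0:ℝ) < (k.factorial : ℝ) := by exact_mod_cast k.factorial_pos
  have hkf1 : (0:ℝ) < ((k+1).factorial : ℝ) := by exact_mod_cast (k+1).factorial_pos
  rw [dcoef, abs_mul, abs_of_nonneg (by positivity : (0:ℝ) ≤ (k : ℝ) + 1)]
  calc ((k : ℝ) + 1) * |c (k+1)| ≤ ((k : ℝ) + 1) * (D / (((k+1).factorial : ℝ) * (k+1).factorial)) :=
        mul_le_mul_of_nonneg_left h (by positivity)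
    _ = D / ((k.factorial : ℝ) * (k+1).factorial) := by
        have : (((k+1).factorial : ℝ)) = ((k : ℝ) + 1) * (k.factorial : ℝ) := by
          push_cast [Nat.factorial_succ]; ring
        rw [this]; field_simp
    _ ≤ D / ((k.factorial : ℝ) * k.factorial) := by
        apply div_le_div_of_nonneg_left hD (by positivity)
        apply mul_le_mul_of_nonneg_left _ hkf.le
        exact_mod_cast Nat.cast_le.mpr (Nat.factorial_le (by omega))

lemma bound_weak {c : ℕ → ℝ} {D : ℝ} (hc : ∀ k, |c k| ≤ D / ((k.factorial : ℝ) * k.factorial)) :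
    ∀ k, |c k| ≤ D / (k.factorial : ℝ) := by
  intro k
  have hD : 0 ≤ D := by
    have := (abs_nonneg (c 0)).trans (hc 0)
    simpa using this
  have hkf : (1:ℝ) ≤ (k.factorial : ℝ) := by exact_mod_cast k.factorial_pos
  refine (hc k).trans ?_
  apply div_le_div_of_nonneg_left hD (by positivity)
  nlinarith

lemma summable_abs_pow {c : ℕ → ℝ} {D : ℝ} (hc : ∀ k, |c k| ≤ D / ((k.factorial : ℝ) * k.factorial)) (u : ℝ) :
    Summable (fun k : ℕ => |c k| * |u| ^ k) := by
  have hD : 0 ≤ D := by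
    have := (abs_nonneg (c 0)).trans (hc 0)
    simpa using this
  have hs : Summable (fun k : ℕ => D * (|u| ^ k / k.factorial)) :=
    (Real.summable_pow_div_factorial |u|).mul_left D
  refine Summable.of_nonneg_of_le (fun k => by positivity) (fun k => ?_) hs
  have h := bound_weak hc k
  have hkf : (0:ℝ) < (k.factorial : ℝ) := by exact_mod_cast k.factorial_pos
  calc |c k| * |u| ^ k ≤ (D / k.factorial) * |u| ^ k := by
        apply mul_le_mul_of_nonneg_right h (by positivity)
    _ = D * (|u| ^ k / k.factorial) := by ring

lemma summable_pow {c : ℕ → ℝ} {D : ℝ} (hc : ∀ k, |c k| ≤ D / ((k.factorial : ℝ) * k.factorial)) (u : ℝ) :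
    Summable (fun k : ℕ => c k * u ^ k) := by
  apply Summable.of_norm
  apply (summable_abs_pow hc u).congr
  intro k
  rw [norm_mul, Real.norm_eq_abs, Real.norm_eq_abs, abs_pow]

set_option maxHeartbeats 1000000 in
/-- Differentiation of the power series. -/
lemma hasDerivAt_psum {c : ℕ → ℝ} {D : ℝ} (hc : ∀ k, |c k| ≤ D / ((k.factorial : ℝ) * k.factorial)) (u : ℝ) :
    HasDerivAt (psum c) (psum (dcoef c) u) u := by
  have hD : 0 ≤ D := by
    have := (abs_nonneg (c 0)).trans (hc 0)
    simpa using this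
  set R : ℝ := |u| + 1 with hR
  have hR1 : 1 ≤ R := by simp [hR]
  have hR0 : 0 < R := lt_of_lt_of_le one_pos hR1
  have hbound : ∀ (n : ℕ) (y : ℝ), y ∈ Set.Ioo (-R) R →
      ‖c n * ((n : ℝ) * y ^ (n - 1))‖ ≤ D * ((2 * R) ^ n / n.factorial) := by
    intro n y hy
    have hyR : |y| ≤ R := by
      rw [abs_le]; exact ⟨hy.1.le, hy.2.le⟩
    have h1 : ‖c n * ((n : ℝ) * y ^ (n - 1))‖ = |c n| * ((n : ℝ) * |y| ^ (n - 1)) := by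
      rw [norm_mul, Real.norm_eq_abs, Real.norm_eq_abs, abs_mul, abs_pow,
        Nat.abs_cast]
    rw [h1]
    have h2 : |y| ^ (n - 1) ≤ R ^ (n - 1) := pow_le_pow_left₀ (abs_nonneg y) hyR _
    have h3 : (n : ℝ) * R ^ (n - 1) ≤ (2 * R) ^ n := by
      have hn2 : (n : ℝ) ≤ 2 ^ n := by exact_mod_cast (Nat.lt_two_pow_self (n := n)).le
      have hRp : R ^ (n - 1) ≤ R ^ n := pow_le_pow_right₀ hR1 (Nat.sub_le n 1)
      calc (n : ℝ) * R ^ (n - 1) ≤ 2 ^ n * R ^ n := by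
            apply mul_le_mul hn2 (hRp.trans (le_refl _)) (by positivity) (by positivity)
        _ = (2 * R) ^ n := by rw [mul_pow]
    calc |c n| * ((n : ℝ) * |y| ^ (n - 1))
        ≤ (D / n.factorial) * ((n : ℝ) * R ^ (n - 1)) := by
          apply mul_le_mul (bound_weak hc n) _ (by positivity) (by positivity)
          exact mul_le_mul_of_nonneg_left h2 (by positivity)
      _ ≤ (D / n.factorial) * (2 * R) ^ n := by
          apply mul_le_mul_of_nonneg_left h3 (by positivity)
      _ = D * ((2 * R) ^ n / n.factorial) := by ring
  have hu : Summable (fun n : ℕ => D * ((2 * R) ^ n / n.factorial)) :=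
    (Real.summable_pow_div_factorial (2 * R)).mul_left D
  have hmem : u ∈ Set.Ioo (-R) R := by
    constructor
    · have := neg_abs_le u; simp only [hR]; linarith
    · have := le_abs_self u; simp only [hR]; linarith
  have h0mem : (0 : ℝ) ∈ Set.Ioo (-R) R := ⟨by linarith, hR0⟩
  have hder : HasDerivAt (fun z : ℝ => ∑' n : ℕ, c n * z ^ n)
      (∑' n : ℕ, c n * ((n : ℝ) * u ^ (n - 1))) u :=
    hasDerivAt_tsum_of_isPreconnected hu isOpen_Ioo
      (convex_Ioo _ _).isPreconnected
      (fun n y _ => (hasDerivAt_pow n y).const_mul (c n)) hbound h0mem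
      (summable_pow hc 0) hmem
  have hsum : Summable (fun n : ℕ => c n * ((n : ℝ) * u ^ (n - 1))) := by
    apply Summable.of_norm
    exact Summable.of_nonneg_of_le (fun n => norm_nonneg _)
      (fun n => hbound n u hmem) hu
  have heq : (∑' n : ℕ, c n * ((n : ℝ) * u ^ (n - 1))) = psum (dcoef c) u := by
    rw [Summable.tsum_eq_zero_add hsum]
    simp only [Nat.cast_zero, zero_mul, mul_zero, zero_add, psum, dcoef]
    apply tsum_congr
    intro k
    push_cast
    ring
  rw [← heq]
  exact hder

/-- The key coefficient recurrence. -/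
lemma a_rec {ν : ℝ} (hν : 0 ≤ ν) (k : ℕ) :
    ((k : ℝ) + 1) * ((k : ℝ) + ν + 1) * a ν (k + 1) = -(a ν k) := by
  have h1 : (0:ℝ) < (k:ℝ) + 1 := by positivity
  have h2 : (0:ℝ) < (k:ℝ) + ν + 1 := by positivity
  have hG1 : 0 < Real.Gamma ((k:ℝ) + 1) := Real.Gamma_pos_of_pos (by positivity)
  have hG2 := gamma_pos hν k
  have e1 : Real.Gamma (((k+1:ℕ) : ℝ) + 1) = ((k:ℝ) + 1) * Real.Gamma ((k:ℝ) + 1) := by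
    push_cast
    rw [show (k:ℝ) + 1 + 1 = ((k:ℝ) + 1) + 1 by ring, Real.Gamma_add_one (ne_of_gt h1)]
  have e2 : Real.Gamma (((k+1:ℕ) : ℝ) + ν + 1) = ((k:ℝ) + ν + 1) * Real.Gamma ((k:ℝ) + ν + 1) := by
    push_cast
    rw [show (k:ℝ) + 1 + ν + 1 = ((k:ℝ) + ν + 1) + 1 by ring, Real.Gamma_add_one (ne_of_gt h2)]
  simp only [a, e1, e2, pow_succ]
  field_simp

set_option maxHeartbeats 1000000 in
/-- The hypergeometric-type ODE for `g(u) = Σ a_k u^k`:  `u g'' + (ν+1) g' + g = 0`. -/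
lemma g_ode {ν : ℝ} (hν : 0 ≤ ν) (u : ℝ) :
    u * psum (dcoef (dcoef (a ν))) u + (ν + 1) * psum (dcoef (a ν)) u + psum (a ν) u = 0 := by
  have ha := fun k => abs_a_le hν k
  have hd1 := dcoef_bound ha
  have hd2 := dcoef_bound hd1
  have s0 := summable_pow ha u
  have s1 := summable_pow hd1 u
  have s2 := summable_pow hd2 u
  set A : ℕ → ℝ := fun k => (ν + 1) * dcoef (a ν) k + a ν k with hA
  have hsA : Summable fun k => A k * u ^ k := by
    apply ((s1.mul_left (ν + 1)).add s0).congr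
    intro k
    simp only [A]
    ring
  have hA0 : A 0 = 0 := by
    have h := a_rec hν 0
    norm_num at h
    simp only [A, dcoef]
    norm_num
    linarith
  have key : ∀ k, dcoef (dcoef (a ν)) k + A (k + 1) = 0 := by
    intro k
    have h := a_rec hν (k + 1)
    push_cast at h
    simp only [A, dcoef]
    push_cast
    linear_combination h
  have e1 : u * psum (dcoef (dcoef (a ν))) u = ∑' k : ℕ, dcoef (dcoef (a ν)) k * u ^ (k + 1) := by
    rw [psum, ← tsum_mul_left]
    apply tsum_congr
    intro k
    ring
  have e2 : (ν + 1) * psum (dcoef (a ν)) u + psum (a ν) u = ∑' k : ℕ, A (k + 1) * u ^ (k + 1) := by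
    have step1 : (ν + 1) * psum (dcoef (a ν)) u + psum (a ν) u = ∑' k : ℕ, A k * u ^ k := by
      rw [psum, psum, ← tsum_mul_left, ← Summable.tsum_add (s1.mul_left (ν + 1)) s0]
      apply tsum_congr
      intro k
      simp only [A]
      ring
    rw [step1, Summable.tsum_eq_zero_add hsA, hA0]
    simp
  have hs2' : Summable fun k : ℕ => dcoef (dcoef (a ν)) k * u ^ (k + 1) := by
    apply (s2.mul_right u).congr
    intro k
    rw [pow_succ]
    ring
  have hsA' : Summable fun k : ℕ => A (k + 1) * u ^ (k + 1) :=
    (summable_nat_add_iff 1).mpr hsA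
  rw [add_assoc, e1, e2, ← Summable.tsum_add hs2' hsA']
  have : ∀ k : ℕ, dcoef (dcoef (a ν)) k * u ^ (k + 1) + A (k + 1) * u ^ (k + 1) = 0 := by
    intro k
    have h := key k
    linear_combination u ^ (k + 1) * h
  calc (∑' k : ℕ, (dcoef (dcoef (a ν)) k * u ^ (k + 1) + A (k + 1) * u ^ (k + 1)))
      = ∑' _ : ℕ, (0:ℝ) := tsum_congr this
    _ = 0 := tsum_zero

end BesselAux

open BesselAux

/-- The Bessel function of the first kind `J_ν`, defined for `r > 0` by its power
series `J_ν(r) = Σ_{k=0}^∞ [(−1)^k / (Γ(k+1) Γ(k+ν+1))] · (r/2)^(2k+ν)`. -/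
noncomputable def besselJ (ν : ℝ) (r : ℝ) : ℝ :=
  ∑' k : ℕ, ((-1 : ℝ) ^ k / (Real.Gamma ((k : ℝ) + 1) * Real.Gamma ((k : ℝ) + ν + 1))) *
    (r / 2) ^ (2 * (k : ℝ) + ν)

namespace BesselAux

variable (ν : ℝ)

noncomputable def F (r : ℝ) : ℝ := (r / 2) ^ ν * psum (a ν) (r ^ 2 / 4)

noncomputable def F1 (r : ℝ) : ℝ :=
  ν * (r / 2) ^ (ν - 1) * (1 / 2) * psum (a ν) (r ^ 2 / 4)
    + (r / 2) ^ ν * (psum (dcoef (a ν)) (r ^ 2 / 4) * (r / 2))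

noncomputable def F2 (r : ℝ) : ℝ :=
  (ν * ((ν - 1) * (r / 2) ^ (ν - 1 - 1) * (1 / 2)) * (1 / 2)) * psum (a ν) (r ^ 2 / 4)
    + ν * (r / 2) ^ (ν - 1) * (1 / 2) * (psum (dcoef (a ν)) (r ^ 2 / 4) * (r / 2))
    + ((ν * (r / 2) ^ (ν - 1) * (1 / 2)) * (psum (dcoef (a ν)) (r ^ 2 / 4) * (r / 2))
      + (r / 2) ^ ν * (psum (dcoef (dcoef (a ν))) (r ^ 2 / 4) * (r / 2) * (r / 2)
        + psum (dcoef (a ν)) (r ^ 2 / 4) * (1 / 2)))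

noncomputable def E (r : ℝ) : ℝ := F ν r ^ 2 + r ^ 2 * F1 ν r ^ 2 / (r ^ 2 - ν ^ 2)

variable {ν}

lemma besselJ_eq {r : ℝ} (hν : 0 ≤ ν) (hr : 0 < r) : besselJ ν r = F ν r := by
  have hhalf : (0:ℝ) < r / 2 := by linarith
  have term : ∀ k : ℕ, (r / 2) ^ (2 * (k : ℝ) + ν) = (r ^ 2 / 4) ^ k * (r / 2) ^ ν := by
    intro k
    rw [Real.rpow_add hhalf]
    congr 1
    rw [show (2 * (k : ℝ)) = ((2 * k : ℕ) : ℝ) by push_cast; ring, Real.rpow_natCast, pow_mul]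
    congr 1
    ring
  calc besselJ ν r = ∑' k : ℕ, a ν k * ((r ^ 2 / 4) ^ k * (r / 2) ^ ν) := by
        apply tsum_congr
        intro k
        rw [term k]
        rfl
    _ = (∑' k : ℕ, a ν k * (r ^ 2 / 4) ^ k) * (r / 2) ^ ν := by
        rw [← tsum_mul_right]
        apply tsum_congr
        intro k
        ring
    _ = F ν r := by rw [F, psum, mul_comm]

lemma hasDerivAt_F (hν : 0 ≤ ν) {r : ℝ} (hr : 0 < r) : HasDerivAt (F ν) (F1 ν r) r := by
  have hhalf : (0:ℝ) < r / 2 := by linarith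
  have hd : HasDerivAt (fun x : ℝ => x / 2) (1 / 2 : ℝ) r := (hasDerivAt_id r).div_const 2
  have hpow : HasDerivAt (fun x : ℝ => (x / 2) ^ ν) (ν * (r / 2) ^ (ν - 1) * (1 / 2)) r := by
    have := (Real.hasDerivAt_rpow_const (p := ν) (Or.inl (ne_of_gt hhalf))).comp r hd
    exact this
  have hu : HasDerivAt (fun x : ℝ => x ^ 2 / 4) (r / 2) r := by
    have := (hasDerivAt_pow 2 r).div_const 4
    refine this.congr_deriv ?_
    push_cast
    ring
  have hg0 : HasDerivAt (fun x : ℝ => psum (a ν) (x ^ 2 / 4))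
      (psum (dcoef (a ν)) (r ^ 2 / 4) * (r / 2)) r :=
    (hasDerivAt_psum (fun k => abs_a_le hν k) _).comp r hu
  exact hpow.mul hg0

lemma hasDerivAt_F1 (hν : 0 ≤ ν) {r : ℝ} (hr : 0 < r) : HasDerivAt (F1 ν) (F2 ν r) r := by
  have hhalf : (0:ℝ) < r / 2 := by linarith
  have hd : HasDerivAt (fun x : ℝ => x / 2) (1 / 2 : ℝ) r := (hasDerivAt_id r).div_const 2
  have hu : HasDerivAt (fun x : ℝ => x ^ 2 / 4) (r / 2) r := by
    have := (hasDerivAt_pow 2 r).div_const 4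
    refine this.congr_deriv ?_
    push_cast
    ring
  have hpow : HasDerivAt (fun x : ℝ => (x / 2) ^ ν) (ν * (r / 2) ^ (ν - 1) * (1 / 2)) r := by
    have := (Real.hasDerivAt_rpow_const (p := ν) (Or.inl (ne_of_gt hhalf))).comp r hd
    exact this
  have hpow1 : HasDerivAt (fun x : ℝ => (x / 2) ^ (ν - 1))
      ((ν - 1) * (r / 2) ^ (ν - 1 - 1) * (1 / 2)) r := by
    have := (Real.hasDerivAt_rpow_const (p := ν - 1) (Or.inl (ne_of_gt hhalf))).comp r hd
    exact this
  have hg0 : HasDerivAt (fun x : ℝ => psum (a ν) (x ^ 2 / 4))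
      (psum (dcoef (a ν)) (r ^ 2 / 4) * (r / 2)) r :=
    (hasDerivAt_psum (fun k => abs_a_le hν k) _).comp r hu
  have hg1 : HasDerivAt (fun x : ℝ => psum (dcoef (a ν)) (x ^ 2 / 4))
      (psum (dcoef (dcoef (a ν))) (r ^ 2 / 4) * (r / 2)) r :=
    (hasDerivAt_psum (dcoef_bound (fun k => abs_a_le hν k)) _).comp r hu
  have h1 : HasDerivAt (fun x : ℝ => ν * (x / 2) ^ (ν - 1) * (1 / 2) * psum (a ν) (x ^ 2 / 4))
      (ν * ((ν - 1) * (r / 2) ^ (ν - 1 - 1) * (1 / 2)) * (1 / 2) * psum (a ν) (r ^ 2 / 4)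
        + ν * (r / 2) ^ (ν - 1) * (1 / 2) * (psum (dcoef (a ν)) (r ^ 2 / 4) * (r / 2))) r :=
    ((hpow1.const_mul ν).mul_const (1 / 2)).mul hg0
  have h2 : HasDerivAt (fun x : ℝ => (x / 2) ^ ν * (psum (dcoef (a ν)) (x ^ 2 / 4) * (x / 2)))
      (ν * (r / 2) ^ (ν - 1) * (1 / 2) * (psum (dcoef (a ν)) (r ^ 2 / 4) * (r / 2))
        + (r / 2) ^ ν * (psum (dcoef (dcoef (a ν))) (r ^ 2 / 4) * (r / 2) * (r / 2)
          + psum (dcoef (a ν)) (r ^ 2 / 4) * (1 / 2))) r := by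
    have hmul : HasDerivAt (fun x : ℝ => psum (dcoef (a ν)) (x ^ 2 / 4) * (x / 2))
        (psum (dcoef (dcoef (a ν))) (r ^ 2 / 4) * (r / 2) * (r / 2)
          + psum (dcoef (a ν)) (r ^ 2 / 4) * (1 / 2)) r := hg1.mul hd
    exact hpow.mul hmul
  exact h1.add h2

/-- Bessel's differential equation. -/
lemma bessel_ode (hν : 0 ≤ ν) {r : ℝ} (hr : 0 < r) :
    r ^ 2 * F2 ν r + r * F1 ν r + (r ^ 2 - ν ^ 2) * F ν r = 0 := by
  have hhalf : (0:ℝ) < r / 2 := by linarith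
  have hne : (r / 2 : ℝ) ≠ 0 := ne_of_gt hhalf
  have hrne : (r : ℝ) ≠ 0 := ne_of_gt hr
  have hode := g_ode hν (r ^ 2 / 4)
  have hG0 : psum (a ν) (r ^ 2 / 4) =
      -(r ^ 2 / 4 * psum (dcoef (dcoef (a ν))) (r ^ 2 / 4)
        + (ν + 1) * psum (dcoef (a ν)) (r ^ 2 / 4)) := by linarith
  have e1 : (r / 2) ^ (ν - 1) = (r / 2) ^ ν / (r / 2) := by
    rw [Real.rpow_sub hhalf, Real.rpow_one]
  have e2 : (r / 2) ^ (ν - 1 - 1) = (r / 2) ^ ν / ((r / 2) * (r / 2)) := by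
    rw [Real.rpow_sub hhalf, Real.rpow_sub hhalf, Real.rpow_one, div_div]
  unfold F F1 F2
  rw [hG0, e1, e2]
  field_simp
  ring

lemma energy_antitone (hν : 0 ≤ ν) : AntitoneOn (E ν) (Set.Ici (ν + 1)) := by
  have hx0 : (0:ℝ) < ν + 1 := by linarith
  have main : ∀ x : ℝ, ν + 1 ≤ x → ∃ d : ℝ, HasDerivAt (E ν) d x ∧ d ≤ 0 := by
    intro x hx
    have hxpos : (0:ℝ) < x := lt_of_lt_of_le hx0 hx
    have hxν : ν < x := by linarith
    have hden : (0:ℝ) < x ^ 2 - ν ^ 2 := by nlinarith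
    have hdne : (x ^ 2 - ν ^ 2 : ℝ) ≠ 0 := ne_of_gt hden
    have hF := hasDerivAt_F hν hxpos
    have hF1 := hasDerivAt_F1 hν hxpos
    have hFsq : HasDerivAt (fun y : ℝ => F ν y ^ 2) (2 * F ν x * F1 ν x) x := by
      have := hF.pow 2
      refine this.congr_deriv ?_
      push_cast
      ring
    have hnum : HasDerivAt (fun y : ℝ => y ^ 2 * F1 ν y ^ 2)
        (2 * x * F1 ν x ^ 2 + x ^ 2 * (2 * F1 ν x * F2 ν x)) x := by
      have := (hasDerivAt_pow 2 x).mul (hF1.pow 2)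
      refine this.congr_deriv ?_
      push_cast
      rw [Pi.pow_apply]
      ring
    have hdenD : HasDerivAt (fun y : ℝ => y ^ 2 - ν ^ 2) (2 * x) x := by
      have := (hasDerivAt_pow 2 x).sub_const (ν ^ 2)
      refine this.congr_deriv ?_
      push_cast
      ring
    have hE : HasDerivAt (E ν)
        (2 * F ν x * F1 ν x +
          ((2 * x * F1 ν x ^ 2 + x ^ 2 * (2 * F1 ν x * F2 ν x)) * (x ^ 2 - ν ^ 2)
            - x ^ 2 * F1 ν x ^ 2 * (2 * x)) / (x ^ 2 - ν ^ 2) ^ 2) x := by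
      have := hFsq.add (hnum.div hdenD hdne)
      exact this
    refine ⟨_, hE, ?_⟩
    have hode := bessel_ode hν hxpos
    have hF2 : F2 ν x = (-(x * F1 ν x) - (x ^ 2 - ν ^ 2) * F ν x) / x ^ 2 := by
      field_simp
      linarith
    rw [hF2]
    have key : 2 * F ν x * F1 ν x +
        ((2 * x * F1 ν x ^ 2 + x ^ 2 * (2 * F1 ν x *
          ((-(x * F1 ν x) - (x ^ 2 - ν ^ 2) * F ν x) / x ^ 2))) * (x ^ 2 - ν ^ 2)
          - x ^ 2 * F1 ν x ^ 2 * (2 * x)) / (x ^ 2 - ν ^ 2) ^ 2 =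
        -(2 * x * ν ^ 2 * F1 ν x ^ 2) / (x ^ 2 - ν ^ 2) ^ 2
          - 2 * x * F1 ν x ^ 2 / (x ^ 2 - ν ^ 2) := by
      field_simp
      ring
    rw [key, neg_div]
    have t1 : 0 ≤ 2 * x * ν ^ 2 * F1 ν x ^ 2 / (x ^ 2 - ν ^ 2) ^ 2 := by positivity
    have t2 : 0 ≤ 2 * x * F1 ν x ^ 2 / (x ^ 2 - ν ^ 2) := by positivity
    linarith
  apply antitoneOn_of_deriv_nonpos (convex_Ici _)
  · intro x hx
    obtain ⟨d, hE, _⟩ := main x hx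
    exact hE.continuousAt.continuousWithinAt
  · intro x hx
    rw [interior_Ici] at hx
    obtain ⟨d, hE, _⟩ := main x (le_of_lt hx)
    exact hE.differentiableAt.differentiableWithinAt
  · intro x hx
    rw [interior_Ici] at hx
    obtain ⟨d, hE, hd⟩ := main x (le_of_lt hx)
    rw [hE.deriv]
    exact hd

end BesselAux

theorem besselJ_bounded (ν : ℝ) (hν : 0 ≤ ν) :
    ∃ C : ℝ, 0 < C ∧ ∀ r : ℝ, 0 < r → |besselJ ν r| ≤ C := by
  set x₀ : ℝ := ν + 1 with hx₀
  have hx₀pos : (0:ℝ) < x₀ := by rw [hx₀]; linarith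
  have ha := fun k => abs_a_le hν k
  have hB : Summable (fun k : ℕ => |a ν k| * (x₀ ^ 2 / 4) ^ k) := by
    apply (summable_abs_pow ha (x₀ ^ 2 / 4)).congr
    intro k
    rw [abs_of_nonneg (by positivity : (0:ℝ) ≤ x₀ ^ 2 / 4)]
  set B : ℝ := ∑' k : ℕ, |a ν k| * (x₀ ^ 2 / 4) ^ k with hBdef
  set M : ℝ := max 1 ((x₀ / 2) ^ ν) with hMdef
  set S : ℝ := Real.sqrt (E ν x₀) with hSdef
  have hB0 : 0 ≤ B := tsum_nonneg (fun k => by positivity)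
  have hM1 : (1:ℝ) ≤ M := le_max_left _ _
  have hM0 : (0:ℝ) ≤ M := by linarith
  have hS0 : 0 ≤ S := Real.sqrt_nonneg _
  refine ⟨M * B + S + 1, by nlinarith, ?_⟩
  intro r hr
  rw [besselJ_eq hν hr]
  rcases le_or_gt r x₀ with hcase | hcase
  · -- small r : series bound
    have h1 : |F ν r| = (r / 2) ^ ν * |psum (a ν) (r ^ 2 / 4)| := by
      rw [F, abs_mul, abs_of_nonneg (Real.rpow_nonneg (by linarith) ν)]
    have hsum : Summable fun k : ℕ => ‖a ν k * (r ^ 2 / 4) ^ k‖ := by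
      apply (summable_abs_pow ha (r ^ 2 / 4)).congr
      intro k
      rw [norm_mul, norm_pow, Real.norm_eq_abs, Real.norm_eq_abs,
        abs_of_nonneg (by positivity : (0:ℝ) ≤ r ^ 2 / 4)]
    have h2 : |psum (a ν) (r ^ 2 / 4)| ≤ B := by
      calc |psum (a ν) (r ^ 2 / 4)| ≤ ∑' k : ℕ, ‖a ν k * (r ^ 2 / 4) ^ k‖ :=
            norm_tsum_le_tsum_norm hsum
        _ ≤ B := by
            apply Summable.tsum_le_tsum _ hsum hB
            intro k
            rw [norm_mul, norm_pow, Real.norm_eq_abs, Real.norm_eq_abs,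
              abs_of_nonneg (by positivity : (0:ℝ) ≤ r ^ 2 / 4)]
            apply mul_le_mul_of_nonneg_left _ (abs_nonneg _)
            apply pow_le_pow_left₀ (by positivity)
            nlinarith
    have h3 : (r / 2) ^ ν ≤ M := by
      rcases le_total (r / 2) 1 with h | h
      · exact le_trans (Real.rpow_le_one (by linarith) h hν) (le_max_left _ _)
      · exact le_trans (Real.rpow_le_rpow (by linarith) (by linarith) hν) (le_max_right _ _)
    calc |F ν r| = (r / 2) ^ ν * |psum (a ν) (r ^ 2 / 4)| := h1
      _ ≤ M * B := mul_le_mul h3 h2 (abs_nonneg _) hM0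
      _ ≤ M * B + S + 1 := by linarith
  · -- large r : energy bound
    have hx₀r : x₀ ≤ r := hcase.le
    have hEle : E ν r ≤ E ν x₀ :=
      energy_antitone hν (Set.self_mem_Ici) (Set.mem_Ici.mpr hx₀r) hx₀r
    have hden : (0:ℝ) < r ^ 2 - ν ^ 2 := by nlinarith
    have hFr : F ν r ^ 2 ≤ E ν r := by
      have h0 : 0 ≤ r ^ 2 * F1 ν r ^ 2 / (r ^ 2 - ν ^ 2) := by positivity
      have hEr : E ν r = F ν r ^ 2 + r ^ 2 * F1 ν r ^ 2 / (r ^ 2 - ν ^ 2) := rfl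
      linarith
    have habs : |F ν r| ≤ S := by
      rw [← Real.sqrt_sq_eq_abs]
      exact Real.sqrt_le_sqrt (le_trans hFr hEle)
    have hMB : 0 ≤ M * B := mul_nonneg hM0 hB0
    linarith
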